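/- With notation as in the main theorem (k even, n a multiple of k, f skew-symmetric homogeneous of degree (k/2)(n-1)), the hyperpfaffian expands as Pf(f(x_S))_{S ∈ binom([n],k)} = Σ_{ρ ∈ W_{n,k}} (-1)^ρ · c(ρ) · w(ρ), where W_{n,k} is the set of weighted oriented partitions of [n]: oriented partitions ρ = {C_1,...,C_{n/k}} with a composition w_i = (w(c_{i,1}),...,w(c_{i,k})) ∈ Γ_{n,k} assigned to each ordered block C_i = (c_{i,1},...,c_{i,k}); c(ρ) = Π_i a_{w_i} and w(ρ) = Π_i Π_j x_{c_{i,j}}^{w(c_{i,j})}. -/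

import Mathlib

open Finset Equiv MvPolynomial

open scoped Classical

noncomputable section

/-- The position of the `j`-th element of the `i`-th block. -/
def bpos (m k : ℕ) (i : Fin m) (j : Fin k) : Fin (m * k) :=
  ⟨k * (i : ℕ) + (j : ℕ), by
    have hi := i.isLt
    have hj := j.isLt
    calc k * (i : ℕ) + (j : ℕ) < k * (i : ℕ) + k := by omega
      _ = k * ((i : ℕ) + 1) := by ring
      _ ≤ k * m := Nat.mul_le_mul_left k hi
      _ = m * k := Nat.mul_comm k m⟩

/-- Each block of the (oriented) partition is listed in increasing order. -/
def IsBlockMono (m k : ℕ) (π : Equiv.Perm (Fin (m * k))) : Prop :=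
  ∀ i : Fin m, StrictMono fun j : Fin k => π (bpos m k i j)

/-- The blocks are listed in increasing order of their first elements. -/
def IsLeadMono (m k : ℕ) (π : Equiv.Perm (Fin (m * k))) : Prop :=
  ∀ (i i' : Fin m) (j : Fin k), i < i' →
    π (bpos m k i ⟨0, j.pos⟩) < π (bpos m k i' ⟨0, j.pos⟩)

/-- Canonical representative of a set partition of `[n]`, `n = m*k`, into `m` blocks of
size `k`: each block increasing and blocks ordered by their minima. -/
def IsPartRep (m k : ℕ) (π : Equiv.Perm (Fin (m * k))) : Prop :=
  IsBlockMono m k π ∧ IsLeadMono m k π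

/-- A `k`-ary function is skew-symmetric. -/
def IsSkewFun {k : ℕ} {α R : Type*} [CommRing R] (f : (Fin k → α) → R) : Prop :=
  ∀ (σ : Equiv.Perm (Fin k)) (v : Fin k → α),
    f (v ∘ σ) = (Equiv.Perm.sign σ : ℤ) • f v

/-- The hyperpfaffian of a skew-symmetric `k`-ary function on `[m*k]`:
the signed sum over all set partitions of `[m*k]` into `m` blocks of size `k`. -/
def hyperPf (m k : ℕ) {R : Type*} [CommRing R]
    (f : (Fin k → Fin (m * k)) → R) : R :=
  ∑ π ∈ Finset.univ.filter (IsPartRep m k),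
    (Equiv.Perm.sign π : ℤ) • ∏ i : Fin m, f fun j => π (bpos m k i j)

/-- A polynomial in `k` variables is skew-symmetric. -/
def IsSkewPoly {k : ℕ} {R : Type*} [CommRing R] (f : MvPolynomial (Fin k) R) : Prop :=
  ∀ σ : Equiv.Perm (Fin k),
    MvPolynomial.rename (⇑σ) f = (Equiv.Perm.sign σ : ℤ) • f

/-- The hyperpfaffian `Pf (f(x_S))` of the values of a polynomial `f` in `k` variables
at the variables indexed by the `k`-subsets `S` of `[m*k]`. -/
def hyperPfPoly (m k : ℕ) {R : Type*} [CommRing R]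
    (f : MvPolynomial (Fin k) R) : MvPolynomial (Fin (m * k)) R :=
  ∑ π ∈ Finset.univ.filter (IsPartRep m k),
    (Equiv.Perm.sign π : ℤ) •
      ∏ i : Fin m, MvPolynomial.rename (fun j => π (bpos m k i j)) f

/-- The Vandermonde product. -/
def vand (n : ℕ) (R : Type*) [CommRing R] : MvPolynomial (Fin n) R :=
  ∏ p ∈ Finset.univ.filter (fun p : Fin n × Fin n => p.1 < p.2),
    (MvPolynomial.X p.2 - MvPolynomial.X p.1)

/-- The coefficient of `f` at the monomial with exponent vector `r`. -/
def coeffOf {k : ℕ} {R : Type*} [CommRing R] (f : MvPolynomial (Fin k) R)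
    (r : Fin k → ℕ) : R :=
  MvPolynomial.coeff (Finsupp.equivFunOnFinite.symm r) f

/-- Membership in `Γ_{n,k}`: a strictly increasing composition of `k/2*(n-1)`
into `k` distinct nonnegative parts. -/
def InGamma (n k : ℕ) (r : Fin k → ℕ) : Prop :=
  StrictMono r ∧ ∑ j, r j = k / 2 * (n - 1)

/-- Canonical representative of an element `β` of `R_{n,k}`, encoded as a permutation `e` of
`Fin (m*k)` (identified with `{0,…,n-1}`): the blocks of `e` are the compositions of `β`,
each block is increasing and sums to `k/2*(n-1)`, and the blocks are ordered canonically. -/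
def IsWeightRep (m k : ℕ) (e : Equiv.Perm (Fin (m * k))) : Prop :=
  IsPartRep m k e ∧
    ∀ i : Fin m, ∑ j : Fin k, ((e (bpos m k i j)) : ℕ) = k / 2 * (m * k - 1)

/-- The weight of the element `x` of `[m*k]` in the weighted oriented partition with
oriented partition (representative) `π` and weight vectors `w`. -/
def wtOf (m k : ℕ) (π : Equiv.Perm (Fin (m * k))) (w : Fin m → Fin k → ℕ) :
    Fin (m * k) → ℕ := fun x =>
  w ⟨((π.symm x : Fin (m*k)) : ℕ) / k, Nat.div_lt_of_lt_mul (lt_of_lt_of_le (π.symm x).isLt (le_of_eq (Nat.mul_comm m k)))⟩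
    ⟨((π.symm x : Fin (m*k)) : ℕ) % k, Nat.mod_lt _ (by
      have ht := (π.symm x).isLt
      have hk : k ≠ 0 := by rintro rfl; omega
      omega)⟩

end

namespace Stmt7Aux

open Equiv Equiv.Perm Finset

lemma bpos_eq (m k : ℕ) (i : Fin m) (j : Fin k) :
    bpos m k i j = finProdFinEquiv (i, j) := by
  apply Fin.ext
  simp only [bpos, finProdFinEquiv, Equiv.coe_fn_mk]
  exact Nat.add_comm _ _

lemma bpos_inj (m k : ℕ) (i : Fin m) : Function.Injective (bpos m k i) := by
  intro a b h
  have := congrArg Fin.val h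
  simp only [bpos] at this
  exact Fin.ext (by omega)

lemma perm_ext_bpos {m k : ℕ} {π π' : Equiv.Perm (Fin (m * k))}
    (h : ∀ (i : Fin m) (j : Fin k), π (bpos m k i j) = π' (bpos m k i j)) : π = π' := by
  apply Equiv.ext
  intro x
  obtain ⟨⟨i, j⟩, rfl⟩ := finProdFinEquiv.surjective x
  rw [← bpos_eq, h]

/-- The permutation of positions permuting blocks by `b` and within (target) block `b i`
by `s i`. -/
def shuffle (m k : ℕ) (b : Equiv.Perm (Fin m)) (s : Fin m → Equiv.Perm (Fin k)) :
    Equiv.Perm (Fin (m * k)) :=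
  Equiv.permCongr finProdFinEquiv
    (Equiv.prodCongrLeft (fun _ : Fin k => b) * Equiv.prodCongrRight s)

lemma shuffle_apply (m k : ℕ) (b : Equiv.Perm (Fin m)) (s : Fin m → Equiv.Perm (Fin k))
    (i : Fin m) (j : Fin k) :
    shuffle m k b s (bpos m k i j) = bpos m k (b i) (s i j) := by
  rw [bpos_eq, bpos_eq]
  simp [shuffle, Equiv.permCongr_apply, Equiv.Perm.mul_apply]

lemma sign_shuffle (m k : ℕ) (hk : Even k) (b : Equiv.Perm (Fin m))
    (s : Fin m → Equiv.Perm (Fin k)) :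
    Equiv.Perm.sign (shuffle m k b s) = ∏ i : Fin m, Equiv.Perm.sign (s i) := by
  unfold shuffle
  rw [Equiv.Perm.sign_permCongr, map_mul, Equiv.Perm.sign_prodCongrLeft,
    Equiv.Perm.sign_prodCongrRight]
  have h1 : (∏ _j : Fin k, Equiv.Perm.sign b) = 1 := by
    rw [Finset.prod_const, Finset.card_univ, Fintype.card_fin]
    obtain ⟨c, rfl⟩ := hk
    rw [← two_mul, pow_mul]
    simp [Int.units_sq]
  rw [h1, one_mul]

lemma sort_unique {q : ℕ} {α : Type*} [LinearOrder α] {u : Fin q → α}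
    (hu : Function.Injective u) {ε : Equiv.Perm (Fin q)} (h : Monotone (u ∘ ε)) :
    Tuple.sort u = ε := by
  have h2 : u ∘ ε = u ∘ Tuple.sort u := Tuple.comp_sort_eq_comp_iff_monotone.mpr h
  exact Equiv.ext fun x => hu (congrFun h2.symm x)

end Stmt7Aux

namespace Stmt7Aux

open Equiv Equiv.Perm Finset MvPolynomial

variable {k : ℕ} {R : Type*} [CommRing R]

lemma symm_apply (r : Fin k → ℕ) (j : Fin k) :
    (Finsupp.equivFunOnFinite.symm r) j = r j := rfl

lemma symm_comp_perm (r : Fin k → ℕ) (ε : Equiv.Perm (Fin k)) :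
    Finsupp.equivFunOnFinite.symm r =
      Finsupp.mapDomain (⇑ε) (Finsupp.equivFunOnFinite.symm (r ∘ ε)) := by
  ext x
  have : x = ε (ε.symm x) := (ε.apply_symm_apply x).symm
  rw [this, Finsupp.mapDomain_apply ε.injective]
  rfl

lemma coeffOf_comp_perm (f : MvPolynomial (Fin k) R) (hskew : IsSkewPoly f)
    (r : Fin k → ℕ) (ε : Equiv.Perm (Fin k)) :
    coeffOf f (r ∘ ε) = ((Equiv.Perm.sign ε : ℤ) : R) * coeffOf f r := by
  have h1 := MvPolynomial.coeff_rename_mapDomain (⇑ε) ε.injective f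
    (Finsupp.equivFunOnFinite.symm (r ∘ ε))
  rw [hskew ε, MvPolynomial.coeff_smul, ← symm_comp_perm] at h1
  unfold coeffOf
  rw [← h1, zsmul_eq_mul]

lemma coeffOf_eq_zero_of_not_injective (f : MvPolynomial (Fin k) R)
    [CharZero R] [NoZeroDivisors R] (hskew : IsSkewPoly f)
    (r : Fin k → ℕ) (hr : ¬ Function.Injective r) :
    coeffOf f r = 0 := by
  simp only [Function.Injective, not_forall] at hr
  obtain ⟨a, b, hab, hne⟩ := hr
  have h1 : r ∘ (Equiv.swap a b) = r := by
    funext x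
    rcases eq_or_ne x a with rfl | hxa
    · rw [Function.comp_apply, Equiv.swap_apply_left, hab]
    rcases eq_or_ne x b with rfl | hxb
    · rw [Function.comp_apply, Equiv.swap_apply_right, hab]
    · rw [Function.comp_apply, Equiv.swap_apply_of_ne_of_ne hxa hxb]
  have h2 := coeffOf_comp_perm f hskew r (Equiv.swap a b)
  rw [h1, Equiv.Perm.sign_swap hne] at h2
  have h3 : (2 : R) * coeffOf f r = 0 := by
    push_cast at h2
    linear_combination h2
  rcases mul_eq_zero.mp h3 with h | h
  · exact absurd h two_ne_zero
  · exact h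

lemma coeffOf_eq_zero_of_sum_ne {deg : ℕ} (f : MvPolynomial (Fin k) R)
    (hhom : f.IsHomogeneous deg) (r : Fin k → ℕ) (hr : (∑ j, r j) ≠ deg) :
    coeffOf f r = 0 := by
  apply hhom.coeff_eq_zero
  rw [Finsupp.degree_apply]
  rwa [Finset.sum_subset (Finset.subset_univ _)]
  intro x _ hx
  simpa using Finsupp.notMem_support_iff.mp hx

lemma rename_monomial_eq {n : ℕ} (g : Fin k → Fin n) (d : Fin k →₀ ℕ) (c : R) :
    MvPolynomial.rename g (MvPolynomial.monomial d c) =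
      MvPolynomial.C c * ∏ j : Fin k, (MvPolynomial.X (g j) : MvPolynomial (Fin n) R) ^ d j := by
  rw [MvPolynomial.monomial_eq, map_mul, MvPolynomial.rename_C]
  congr 1
  rw [Finsupp.prod_fintype _ _ (fun i => pow_zero _), map_prod]
  simp

end Stmt7Aux

namespace Stmt7Aux

open Equiv Equiv.Perm Finset MvPolynomial

variable {k : ℕ} {R : Type*} [CommRing R]

lemma rename_expand {n deg : ℕ} (f : MvPolynomial (Fin k) R) (hhom : f.IsHomogeneous deg)
    (g : Fin k → Fin n) :
    MvPolynomial.rename g f = ∑ D : Fin k → Fin (deg+1),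
      MvPolynomial.C (coeffOf f fun j => (D j : ℕ)) *
        ∏ j : Fin k, (MvPolynomial.X (g j) : MvPolynomial (Fin n) R) ^ ((D j : ℕ)) := by
  set F : (Fin k →₀ ℕ) → MvPolynomial (Fin n) R :=
    fun d => MvPolynomial.C (MvPolynomial.coeff d f) *
      ∏ j : Fin k, (MvPolynomial.X (g j) : MvPolynomial (Fin n) R) ^ d j with hF
  set e : (Fin k → Fin (deg+1)) → (Fin k →₀ ℕ) :=
    fun D => Finsupp.equivFunOnFinite.symm (fun j => (D j : ℕ)) with he
  have he_inj : Function.Injective e := by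
    intro D D' h
    funext j
    have := congrArg (fun d => d j) h
    simp only [he, symm_apply] at this
    exact Fin.ext this
  have step1 : MvPolynomial.rename g f = ∑ d ∈ f.support, F d := by
    conv_lhs => rw [f.as_sum]
    rw [map_sum]
    exact Finset.sum_congr rfl fun d _ => rename_monomial_eq g d _
  have step2 : ∀ D : Fin k → Fin (deg+1),
      MvPolynomial.C (coeffOf f fun j => (D j : ℕ)) *
        ∏ j : Fin k, (MvPolynomial.X (g j) : MvPolynomial (Fin n) R) ^ ((D j : ℕ)) = F (e D) := by
    intro D
    rfl
  rw [step1]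
  calc ∑ d ∈ f.support, F d = ∑ d ∈ Finset.univ.image e, F d := by
        apply Finset.sum_subset
        · intro d hd
          have hcoeff : MvPolynomial.coeff d f ≠ 0 := MvPolynomial.mem_support_iff.mp hd
          have hdeg : d.degree = deg := by
            by_contra hne
            exact hcoeff (hhom.coeff_eq_zero hne)
          have hsum : ∑ j : Fin k, d j = deg := by
            rw [← hdeg, Finsupp.degree_apply]
            exact (Finset.sum_subset (Finset.subset_univ _) (fun x _ hx => by
              simpa using Finsupp.notMem_support_iff.mp hx)).symm
          have hle : ∀ j, d j < deg + 1 := by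
            intro j
            have h1 : d j ≤ ∑ x : Fin k, d x := Finset.single_le_sum
              (fun i _ => Nat.zero_le _) (Finset.mem_univ j)
            omega
          rw [Finset.mem_image]
          refine ⟨fun j => ⟨d j, hle j⟩, Finset.mem_univ _, ?_⟩
          ext j
          rfl
        · intro d _ hd
          have : MvPolynomial.coeff d f = 0 := by
            by_contra hne
            exact hd (MvPolynomial.mem_support_iff.mpr hne)
          simp [hF, this]
    _ = ∑ D : Fin k → Fin (deg+1), F (e D) := Finset.sum_image fun a _ b _ h => he_inj h
    _ = _ := by
        exact Finset.sum_congr rfl fun D _ => (step2 D).symm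

end Stmt7Aux

namespace Stmt7Aux

open Equiv Equiv.Perm Finset MvPolynomial

lemma zsmul_C_mul {n : ℕ} {R : Type*} [CommRing R] (z : ℤ) (p : MvPolynomial (Fin n) R) :
    z • p = MvPolynomial.C ((z : R)) * p := by
  rw [← MvPolynomial.smul_eq_C_mul, Int.cast_smul_eq_zsmul]

lemma units_cast_prod {m : ℕ} {R : Type*} [CommRing R] (u : Fin m → ℤˣ) :
    ∏ i, ((u i : ℤ) : R) = (((∏ i, u i : ℤˣ) : ℤ) : R) := by
  rw [← Int.cast_prod]
  norm_cast

lemma L1core {m k : ℕ} {R : Type*} [Field R] [CharZero R]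
    (f : MvPolynomial (Fin k) R) (hhom : f.IsHomogeneous (k / 2 * (m * k - 1)))
    (hskew : IsSkewPoly f) (π₀ : Equiv.Perm (Fin (m * k))) :
    (∏ i : Fin m, MvPolynomial.rename (fun j => π₀ (bpos m k i j)) f)
      = ∑ σ : Fin m → Equiv.Perm (Fin k),
          ∑ w ∈ Finset.univ.filter
            (fun w : Fin m → Fin k → Fin (k / 2 * (m * k - 1) + 1) =>
              ∀ i : Fin m, InGamma (m * k) k fun j => (w i j : ℕ)),
          (((∏ i, Equiv.Perm.sign (σ i) : ℤˣ) : ℤ)) •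
            (MvPolynomial.C (∏ i : Fin m, coeffOf f fun j => (w i j : ℕ)) *
              ∏ i : Fin m, ∏ j : Fin k,
                (MvPolynomial.X (π₀ (bpos m k i (σ i j))) : MvPolynomial (Fin (m*k)) R)
                  ^ ((w i j : ℕ))) := by
  classical
  set deg := k / 2 * (m * k - 1) with hdeg
  set Γf : Finset (Fin m → Fin k → Fin (deg + 1)) := Finset.univ.filter
      (fun w : Fin m → Fin k → Fin (deg + 1) =>
        ∀ i : Fin m, InGamma (m * k) k fun j => (w i j : ℕ)) with hΓf
  set G : (Fin m → Fin k → Fin (deg+1)) → MvPolynomial (Fin (m*k)) R := fun Dm =>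
    ∏ i : Fin m, (MvPolynomial.C (coeffOf f fun j => (Dm i j : ℕ)) *
      ∏ j : Fin k, (MvPolynomial.X (π₀ (bpos m k i j)) : MvPolynomial (Fin (m*k)) R)
        ^ ((Dm i j : ℕ))) with hG
  set H : (Fin m → Equiv.Perm (Fin k)) × (Fin m → Fin k → Fin (deg+1)) →
      MvPolynomial (Fin (m*k)) R := fun p =>
    (((∏ i, Equiv.Perm.sign (p.1 i) : ℤˣ) : ℤ)) •
      (MvPolynomial.C (∏ i : Fin m, coeffOf f fun j => (p.2 i j : ℕ)) *
        ∏ i : Fin m, ∏ j : Fin k,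
          (MvPolynomial.X (π₀ (bpos m k i (p.1 i j))) : MvPolynomial (Fin (m*k)) R)
            ^ ((p.2 i j : ℕ))) with hH
  have stepA : (∏ i : Fin m, MvPolynomial.rename (fun j => π₀ (bpos m k i j)) f)
      = ∑ Dm : Fin m → (Fin k → Fin (deg+1)), G Dm := by
    have h1 : ∀ i : Fin m, MvPolynomial.rename (fun j => π₀ (bpos m k i j)) f
        = ∑ D ∈ (Finset.univ : Finset (Fin k → Fin (deg+1))),
            MvPolynomial.C (coeffOf f fun j => (D j : ℕ)) *
              ∏ j : Fin k, (MvPolynomial.X (π₀ (bpos m k i j)) : MvPolynomial (Fin (m*k)) R)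
                ^ ((D j : ℕ)) := fun i => rename_expand f hhom _
    rw [Finset.prod_congr rfl (fun i _ => h1 i), Finset.prod_univ_sum]
    rw [Fintype.piFinset_univ]
  have stepB : ∑ Dm : Fin m → (Fin k → Fin (deg+1)), G Dm
      = ∑ Dm ∈ Finset.univ.filter
          (fun Dm : Fin m → Fin k → Fin (deg+1) => ∀ i,
            Function.Injective (fun j => ((Dm i j : ℕ))) ∧ ∑ j, ((Dm i j : ℕ)) = deg),
          G Dm := by
    symm
    apply Finset.sum_subset (Finset.filter_subset _ _)
    intro Dm _ hDm
    simp only [Finset.mem_filter, Finset.mem_univ, true_and, not_forall] at hDm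
    obtain ⟨i₀, hi₀⟩ := hDm
    have hz : coeffOf f (fun j => ((Dm i₀ j : ℕ))) = 0 := by
      rcases Classical.em (Function.Injective (fun j => ((Dm i₀ j : ℕ)))) with hinj | hinj
      · rcases Classical.em ((∑ j, ((Dm i₀ j : ℕ))) = deg) with hs | hs
        · exact absurd ⟨hinj, hs⟩ hi₀
        · exact coeffOf_eq_zero_of_sum_ne f hhom _ hs
      · exact coeffOf_eq_zero_of_not_injective f hskew _ hinj
    rw [hG]
    exact Finset.prod_eq_zero (Finset.mem_univ i₀) (by rw [hz]; simp)
  have stepC : ∑ Dm ∈ Finset.univ.filter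
          (fun Dm : Fin m → Fin k → Fin (deg+1) => ∀ i,
            Function.Injective (fun j => ((Dm i j : ℕ))) ∧ ∑ j, ((Dm i j : ℕ)) = deg),
          G Dm
      = ∑ p ∈ (Finset.univ : Finset (Fin m → Equiv.Perm (Fin k))) ×ˢ Γf, H p := by
    apply Finset.sum_nbij' (i := fun Dm => (fun i => Tuple.sort (Dm i),
        fun i => Dm i ∘ ⇑(Tuple.sort (Dm i))))
      (j := fun p => fun i => p.2 i ∘ ⇑(p.1 i)⁻¹)
    · -- maps into product
      intro Dm hDm
      simp only [Finset.mem_filter, Finset.mem_univ, true_and] at hDm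
      simp only [Finset.mem_product, Finset.mem_univ, true_and, hΓf, Finset.mem_filter]
      intro i
      constructor
      · apply Monotone.strictMono_of_injective
        · intro a b hab
          exact Tuple.monotone_sort (Dm i) hab
        · exact (hDm i).1.comp (Tuple.sort (Dm i)).injective
      · have h2 : ∑ j : Fin k, ((Dm i (Tuple.sort (Dm i) j) : ℕ))
            = ∑ j : Fin k, ((Dm i j : ℕ)) :=
          Equiv.sum_comp (Tuple.sort (Dm i)) (fun j => ((Dm i j : ℕ)))
        exact h2.trans (hDm i).2
    · -- maps back
      intro p hp
      simp only [Finset.mem_product, Finset.mem_univ, true_and, hΓf,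
        Finset.mem_filter] at hp
      simp only [Finset.mem_filter, Finset.mem_univ, true_and]
      intro i
      have hsm := (hp i).1
      constructor
      · exact hsm.injective.comp (p.1 i)⁻¹.injective
      · have h2 : ∑ j : Fin k, ((p.2 i ((p.1 i)⁻¹ j) : ℕ))
            = ∑ j : Fin k, ((p.2 i j : ℕ)) :=
          Equiv.sum_comp (p.1 i)⁻¹ (fun j => ((p.2 i j : ℕ)))
        exact h2.trans (hp i).2
    · -- left inverse
      intro Dm hDm
      funext i
      funext j
      simp
    · -- right inverse
      intro p hp
      simp only [Finset.mem_product, Finset.mem_univ, true_and, hΓf,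
        Finset.mem_filter] at hp
      have hsort : ∀ i, Tuple.sort (p.2 i ∘ ⇑(p.1 i)⁻¹) = p.1 i := by
        intro i
        have hwinj : Function.Injective (p.2 i) := by
          intro a b hab
          exact (hp i).1.injective (congrArg Fin.val hab)
        apply sort_unique (hwinj.comp (p.1 i)⁻¹.injective)
        have hcomp : (p.2 i ∘ ⇑(p.1 i)⁻¹) ∘ ⇑(p.1 i) = p.2 i := by
          funext j; simp
        rw [hcomp]
        intro a b hab
        exact (hp i).1.monotone hab
      apply Prod.ext
      · funext i
        exact hsort i
      · funext i
        funext j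
        simp only [hsort i]
        simp
    · -- term equality
      intro Dm hDm
      simp only [hG, hH]
      rw [zsmul_C_mul]
      have key : ∀ i : Fin m,
          MvPolynomial.C (coeffOf f fun j => ((Dm i j : ℕ))) *
            ∏ j : Fin k, (MvPolynomial.X (π₀ (bpos m k i j)) : MvPolynomial (Fin (m*k)) R)
              ^ ((Dm i j : ℕ))
          = MvPolynomial.C (((Equiv.Perm.sign (Tuple.sort (Dm i)) : ℤ) : R)) *
            (MvPolynomial.C (coeffOf f fun j => ((Dm i (Tuple.sort (Dm i) j) : ℕ))) *
             ∏ j : Fin k,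
               (MvPolynomial.X (π₀ (bpos m k i (Tuple.sort (Dm i) j))) :
                  MvPolynomial (Fin (m*k)) R) ^ ((Dm i (Tuple.sort (Dm i) j) : ℕ))) := by
        intro i
        have hcoe : (fun j => ((Dm i j : ℕ)))
            = (fun j => ((Dm i (Tuple.sort (Dm i) j) : ℕ))) ∘ ⇑(Tuple.sort (Dm i))⁻¹ := by
          funext j; simp
        have h1 : coeffOf f (fun j => ((Dm i j : ℕ)))
            = ((Equiv.Perm.sign (Tuple.sort (Dm i)) : ℤ) : R) *
              coeffOf f (fun j => ((Dm i (Tuple.sort (Dm i) j) : ℕ))) := by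
          rw [hcoe, coeffOf_comp_perm f hskew _ _]
          norm_num
        have h2 : (∏ j : Fin k, (MvPolynomial.X (π₀ (bpos m k i j)) :
              MvPolynomial (Fin (m*k)) R) ^ ((Dm i j : ℕ)))
            = ∏ j : Fin k, (MvPolynomial.X (π₀ (bpos m k i (Tuple.sort (Dm i) j))) :
                MvPolynomial (Fin (m*k)) R) ^ ((Dm i (Tuple.sort (Dm i) j) : ℕ)) :=
          (Equiv.prod_comp (Tuple.sort (Dm i))
            (fun j => (MvPolynomial.X (π₀ (bpos m k i j)) : MvPolynomial (Fin (m*k)) R)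
              ^ ((Dm i j : ℕ)))).symm
        rw [h1, map_mul, h2, mul_assoc]
      rw [Finset.prod_congr rfl (fun i _ => key i), Finset.prod_mul_distrib,
        Finset.prod_mul_distrib, ← map_prod, ← map_prod, units_cast_prod]
      simp only [Function.comp]
  have stepD : ∑ p ∈ (Finset.univ : Finset (Fin m → Equiv.Perm (Fin k))) ×ˢ Γf, H p
      = ∑ σ : Fin m → Equiv.Perm (Fin k), ∑ w ∈ Γf, H (σ, w) := by
    rw [Finset.sum_product]
  rw [stepA, stepB, stepC, stepD]

end Stmt7Aux

namespace Stmt7Aux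

open Equiv Equiv.Perm Finset MvPolynomial

variable {m k : ℕ}

lemma bpos_pair_inj {i i' : Fin m} {x x' : Fin k}
    (h : bpos m k i x = bpos m k i' x') : i = i' ∧ x = x' := by
  rw [bpos_eq, bpos_eq] at h
  have h2 : (i, x) = (i', x') := finProdFinEquiv.injective h
  exact ⟨congrArg Prod.fst h2, congrArg Prod.snd h2⟩

/-- Leading entries of the blocks of `π` reordered within block `i` by `σ i`. -/
def blockLead (m k : ℕ) (π : Equiv.Perm (Fin (m * k))) (σ : Fin m → Equiv.Perm (Fin k))
    (i : Fin m) : ℕ :=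
  if h : 0 < k then ((π (bpos m k i (σ i ⟨0, h⟩))) : ℕ) else 0

/-- The block reordering permutation induced by reordering blocks within by `σ`. -/
def bperm (m k : ℕ) (π : Equiv.Perm (Fin (m * k))) (σ : Fin m → Equiv.Perm (Fin k)) :
    Equiv.Perm (Fin m) :=
  Tuple.sort (blockLead m k π σ)

/-- The oriented partition obtained from `π` by reordering block `i` by `σ i` and listing
blocks in order of their leading elements. -/
def Phi (m k : ℕ) (π : Equiv.Perm (Fin (m * k))) (σ : Fin m → Equiv.Perm (Fin k)) :
    Equiv.Perm (Fin (m * k)) :=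
  (shuffle m k (bperm m k π σ) (fun i => σ (bperm m k π σ i))).trans π

lemma Phi_apply (π : Equiv.Perm (Fin (m * k))) (σ : Fin m → Equiv.Perm (Fin k))
    (i : Fin m) (j : Fin k) :
    Phi m k π σ (bpos m k i j)
      = π (bpos m k (bperm m k π σ i) (σ (bperm m k π σ i) j)) := by
  simp [Phi, shuffle_apply]

lemma sign_Phi (hk : Even k) (π : Equiv.Perm (Fin (m * k))) (σ : Fin m → Equiv.Perm (Fin k)) :
    Equiv.Perm.sign (Phi m k π σ)
      = Equiv.Perm.sign π * ∏ i : Fin m, Equiv.Perm.sign (σ i) := by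
  have h1 : Phi m k π σ = π * shuffle m k (bperm m k π σ) (fun i => σ (bperm m k π σ i)) := rfl
  rw [h1, map_mul, sign_shuffle m k hk]
  congr 1
  exact Equiv.prod_comp (bperm m k π σ) (fun i => Equiv.Perm.sign (σ i))

lemma blockLead_inj (hp : 0 < k) (π : Equiv.Perm (Fin (m * k)))
    (σ : Fin m → Equiv.Perm (Fin k)) :
    Function.Injective (blockLead m k π σ) := by
  intro a b h
  simp only [blockLead, dif_pos hp] at h
  have h2 := π.injective (Fin.val_injective h)
  exact (bpos_pair_inj h2).1

lemma isLeadMono_Phi (π : Equiv.Perm (Fin (m * k))) (σ : Fin m → Equiv.Perm (Fin k)) :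
    IsLeadMono m k (Phi m k π σ) := by
  intro i i' j hii'
  have hp : 0 < k := j.pos
  rw [Phi_apply, Phi_apply]
  have hmono : StrictMono (blockLead m k π σ ∘ ⇑(bperm m k π σ)) :=
    (Tuple.monotone_sort (blockLead m k π σ)).strictMono_of_injective
      ((blockLead_inj hp π σ).comp (bperm m k π σ).injective)
  have h2 := hmono hii'
  simp only [Function.comp_apply, blockLead, dif_pos hp] at h2
  exact h2

/-- `sortσ π i` sorts block `i` of `π`. -/
def sortP (m k : ℕ) (π : Equiv.Perm (Fin (m * k))) : Fin m → Equiv.Perm (Fin k) :=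
  fun i => Tuple.sort (fun j => π (bpos m k i j))

/-- The canonical representative of the partition underlying `π`. -/
def normP (m k : ℕ) (π : Equiv.Perm (Fin (m * k))) : Equiv.Perm (Fin (m * k)) :=
  Phi m k π (sortP m k π)

lemma isPartRep_normP (π : Equiv.Perm (Fin (m * k))) : IsPartRep m k (normP m k π) := by
  constructor
  · intro i
    set c := bperm m k π (sortP m k π) with hc
    have hinj : Function.Injective (fun j : Fin k => π (bpos m k (c i) j)) :=
      fun a b h => (bpos_pair_inj (π.injective h)).2
    have h1 : (fun j => normP m k π (bpos m k i j))
        = (fun j : Fin k => π (bpos m k (c i) j)) ∘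
            ⇑(Tuple.sort (fun j : Fin k => π (bpos m k (c i) j))) := by
      funext j
      rw [normP, Phi_apply]
      rfl
    rw [h1]
    exact (Tuple.monotone_sort _).strictMono_of_injective (hinj.comp (Equiv.injective _))
  · exact isLeadMono_Phi π (sortP m k π)

end Stmt7Aux

namespace Stmt7Aux

open Equiv Equiv.Perm Finset MvPolynomial

variable {m k : ℕ}

def cperm (m k : ℕ) (π : Equiv.Perm (Fin (m * k))) : Equiv.Perm (Fin m) :=
  bperm m k π (sortP m k π)

lemma normP_apply (π : Equiv.Perm (Fin (m * k))) (i : Fin m) (j : Fin k) :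
    normP m k π (bpos m k i j)
      = π (bpos m k (cperm m k π i) (sortP m k π (cperm m k π i) j)) :=
  Phi_apply π (sortP m k π) i j

lemma sortP_Phi (π₀ : Equiv.Perm (Fin (m * k))) (hπ₀ : IsBlockMono m k π₀)
    (σ : Fin m → Equiv.Perm (Fin k)) (i : Fin m) :
    sortP m k (Phi m k π₀ σ) i = (σ (bperm m k π₀ σ i))⁻¹ := by
  have hu : (fun j => Phi m k π₀ σ (bpos m k i j))
      = fun j => π₀ (bpos m k (bperm m k π₀ σ i) (σ (bperm m k π₀ σ i) j)) := by
    funext j; rw [Phi_apply]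
  show Tuple.sort (fun j => Phi m k π₀ σ (bpos m k i j)) = _
  rw [hu]
  apply sort_unique
  · intro a c h
    exact (σ _).injective (bpos_pair_inj (π₀.injective h)).2
  · have h2 : (fun j => π₀ (bpos m k (bperm m k π₀ σ i) (σ (bperm m k π₀ σ i) j))) ∘
        ⇑(σ (bperm m k π₀ σ i))⁻¹ = fun j => π₀ (bpos m k (bperm m k π₀ σ i) j) := by
      funext j; simp
    rw [h2]
    exact (hπ₀ (bperm m k π₀ σ i)).monotone

lemma sort_const_zero : Tuple.sort (fun _ : Fin m => (0 : ℕ)) = 1 :=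
  Tuple.sort_eq_refl_iff_monotone.mpr monotone_const

lemma blockLead_of_k_zero (hk0 : k = 0) (π : Equiv.Perm (Fin (m * k)))
    (σ : Fin m → Equiv.Perm (Fin k)) :
    blockLead m k π σ = fun _ => 0 := by
  funext i
  rw [blockLead, dif_neg (by omega)]

lemma cperm_Phi (π₀ : Equiv.Perm (Fin (m * k))) (hπ₀ : IsPartRep m k π₀)
    (σ : Fin m → Equiv.Perm (Fin k)) :
    cperm m k (Phi m k π₀ σ) = (bperm m k π₀ σ)⁻¹ := by
  rcases Nat.eq_zero_or_pos k with hk0 | hp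
  · rw [cperm, bperm, bperm, blockLead_of_k_zero hk0, blockLead_of_k_zero hk0,
      sort_const_zero]
    rfl
  · have hBL : blockLead m k (Phi m k π₀ σ) (sortP m k (Phi m k π₀ σ))
        = (fun i => ((π₀ (bpos m k i ⟨0, hp⟩)) : ℕ)) ∘ ⇑(bperm m k π₀ σ) := by
      funext i
      simp only [blockLead, dif_pos hp, Function.comp]
      rw [sortP_Phi π₀ hπ₀.1 σ i, Phi_apply]
      simp
    rw [cperm, bperm, hBL]
    have hlead : StrictMono (fun i => ((π₀ (bpos m k i ⟨0, hp⟩)) : ℕ)) := by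
      intro a c hac
      have h3 := hπ₀.2 a c ⟨0, hp⟩ hac
      exact h3
    apply sort_unique
    · exact hlead.injective.comp (bperm m k π₀ σ).injective
    · have h2 : ((fun i => ((π₀ (bpos m k i ⟨0, hp⟩)) : ℕ)) ∘ ⇑(bperm m k π₀ σ)) ∘
          ⇑(bperm m k π₀ σ)⁻¹ = fun i => ((π₀ (bpos m k i ⟨0, hp⟩)) : ℕ) := by
        funext i; simp
      rw [h2]
      exact hlead.monotone

lemma normP_Phi (π₀ : Equiv.Perm (Fin (m * k))) (hπ₀ : IsPartRep m k π₀)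
    (σ : Fin m → Equiv.Perm (Fin k)) :
    normP m k (Phi m k π₀ σ) = π₀ := by
  apply perm_ext_bpos
  intro i j
  rw [normP_apply, cperm_Phi π₀ hπ₀ σ, sortP_Phi π₀ hπ₀.1 σ _, Phi_apply]
  simp

lemma sigma_Phi (π₀ : Equiv.Perm (Fin (m * k))) (hπ₀ : IsPartRep m k π₀)
    (σ : Fin m → Equiv.Perm (Fin k)) :
    (fun i => (sortP m k (Phi m k π₀ σ) (cperm m k (Phi m k π₀ σ) i))⁻¹) = σ := by
  funext i
  rw [cperm_Phi π₀ hπ₀ σ, sortP_Phi π₀ hπ₀.1 σ _]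
  simp

lemma Phi_normP (π : Equiv.Perm (Fin (m * k))) (hπ : IsLeadMono m k π) :
    Phi m k (normP m k π) (fun i => (sortP m k π (cperm m k π i))⁻¹) = π := by
  apply perm_ext_bpos
  intro i j
  have hp : 0 < k := j.pos
  have hlead : StrictMono (fun i => ((π (bpos m k i ⟨0, hp⟩)) : ℕ)) := by
    intro a c hac
    exact hπ a c ⟨0, hp⟩ hac
  have hb' : bperm m k (normP m k π) (fun i => (sortP m k π (cperm m k π i))⁻¹)
      = (cperm m k π)⁻¹ := by
    have hBL : blockLead m k (normP m k π) (fun i => (sortP m k π (cperm m k π i))⁻¹)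
        = (fun i => ((π (bpos m k i ⟨0, hp⟩)) : ℕ)) ∘ ⇑(cperm m k π) := by
      funext i
      simp only [blockLead, dif_pos hp, Function.comp]
      rw [normP_apply]
      simp
    rw [bperm, hBL]
    apply sort_unique
    · exact hlead.injective.comp (cperm m k π).injective
    · have h2 : ((fun i => ((π (bpos m k i ⟨0, hp⟩)) : ℕ)) ∘ ⇑(cperm m k π)) ∘
          ⇑(cperm m k π)⁻¹ = fun i => ((π (bpos m k i ⟨0, hp⟩)) : ℕ) := by
        funext i; simp
      rw [h2]
      exact hlead.monotone
  rw [Phi_apply, hb', normP_apply]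
  simp

end Stmt7Aux

namespace Stmt7Aux

open Equiv Equiv.Perm Finset MvPolynomial

lemma L2core {m k : ℕ} (hk : Even k) {R : Type*} [CommRing R]
    (f : MvPolynomial (Fin k) R) :
    (∑ π ∈ Finset.univ.filter (IsLeadMono m k),
        ∑ w ∈ Finset.univ.filter
            (fun w : Fin m → Fin k → Fin (k / 2 * (m * k - 1) + 1) =>
              ∀ i : Fin m, InGamma (m * k) k fun j => (w i j : ℕ)),
          (Equiv.Perm.sign π : ℤ) •
            (MvPolynomial.C (∏ i : Fin m, coeffOf f fun j => (w i j : ℕ)) *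
              ∏ i : Fin m, ∏ j : Fin k,
                (MvPolynomial.X (π (bpos m k i j)) : MvPolynomial (Fin (m * k)) R)
                  ^ ((w i j : ℕ))))
      = ∑ π₀ ∈ Finset.univ.filter (IsPartRep m k),
          (Equiv.Perm.sign π₀ : ℤ) •
            ∑ σ : Fin m → Equiv.Perm (Fin k),
              ∑ w ∈ Finset.univ.filter
                  (fun w : Fin m → Fin k → Fin (k / 2 * (m * k - 1) + 1) =>
                    ∀ i : Fin m, InGamma (m * k) k fun j => (w i j : ℕ)),
                (((∏ i, Equiv.Perm.sign (σ i) : ℤˣ) : ℤ)) •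
                  (MvPolynomial.C (∏ i : Fin m, coeffOf f fun j => (w i j : ℕ)) *
                    ∏ i : Fin m, ∏ j : Fin k,
                      (MvPolynomial.X (π₀ (bpos m k i (σ i j))) : MvPolynomial (Fin (m * k)) R)
                        ^ ((w i j : ℕ))) := by
  classical
  set Γf := Finset.univ.filter
      (fun w : Fin m → Fin k → Fin (k / 2 * (m * k - 1) + 1) =>
        ∀ i : Fin m, InGamma (m * k) k fun j => (w i j : ℕ)) with hΓf
  have hΓmem : ∀ (w : Fin m → Fin k → Fin (k / 2 * (m * k - 1) + 1))
      (e : Equiv.Perm (Fin m)), w ∈ Γf → (w ∘ ⇑e) ∈ Γf := by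
    intro w e hw
    simp only [hΓf, Finset.mem_filter, Finset.mem_univ, true_and] at hw ⊢
    exact fun i => hw (e i)
  symm
  have key : ∀ (π₀ : Equiv.Perm (Fin (m * k))) (σ : Fin m → Equiv.Perm (Fin k)),
      ((Equiv.Perm.sign π₀ : ℤ) •
        ∑ w ∈ Γf, (((∏ i, Equiv.Perm.sign (σ i) : ℤˣ) : ℤ)) •
          (MvPolynomial.C (∏ i : Fin m, coeffOf f fun j => (w i j : ℕ)) *
            ∏ i : Fin m, ∏ j : Fin k,
              (MvPolynomial.X (π₀ (bpos m k i (σ i j))) : MvPolynomial (Fin (m * k)) R)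
                ^ ((w i j : ℕ))))
      = ∑ w ∈ Γf, (Equiv.Perm.sign (Phi m k π₀ σ) : ℤ) •
          (MvPolynomial.C (∏ i : Fin m, coeffOf f fun j => (w i j : ℕ)) *
            ∏ i : Fin m, ∏ j : Fin k,
              (MvPolynomial.X (Phi m k π₀ σ (bpos m k i j)) : MvPolynomial (Fin (m * k)) R)
                ^ ((w i j : ℕ))) := by
    intro π₀ σ
    rw [Finset.smul_sum]
    apply Finset.sum_nbij' (i := fun w => w ∘ ⇑(bperm m k π₀ σ))
      (j := fun w => w ∘ ⇑(bperm m k π₀ σ)⁻¹)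
    · intro w hw; exact hΓmem w _ hw
    · intro w hw; exact hΓmem w _ hw
    · intro w _; funext i; simp
    · intro w _; funext i; simp
    · intro w _
      rw [smul_smul]
      have hsgn : (Equiv.Perm.sign π₀ : ℤ) * (((∏ i, Equiv.Perm.sign (σ i) : ℤˣ) : ℤ))
          = (Equiv.Perm.sign (Phi m k π₀ σ) : ℤ) := by
        rw [sign_Phi hk]
        push_cast
        ring
      rw [hsgn]
      congr 1
      have hC : (∏ i : Fin m, coeffOf f fun j => (w i j : ℕ))
          = ∏ i : Fin m, coeffOf f fun j => ((w (bperm m k π₀ σ i) j : ℕ)) :=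
        (Equiv.prod_comp (bperm m k π₀ σ) (fun i => coeffOf f fun j => (w i j : ℕ))).symm
      have hX : (∏ i : Fin m, ∏ j : Fin k,
            (MvPolynomial.X (π₀ (bpos m k i (σ i j))) : MvPolynomial (Fin (m * k)) R)
              ^ ((w i j : ℕ)))
          = ∏ i : Fin m, ∏ j : Fin k,
              (MvPolynomial.X (π₀ (bpos m k (bperm m k π₀ σ i) (σ (bperm m k π₀ σ i) j))) :
                MvPolynomial (Fin (m * k)) R) ^ ((w (bperm m k π₀ σ i) j : ℕ)) :=
        (Equiv.prod_comp (bperm m k π₀ σ) (fun i => ∏ j : Fin k,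
          (MvPolynomial.X (π₀ (bpos m k i (σ i j))) : MvPolynomial (Fin (m * k)) R)
            ^ ((w i j : ℕ)))).symm
      rw [hC, hX]
      simp only [Phi_apply, Function.comp]
  calc ∑ π₀ ∈ Finset.univ.filter (IsPartRep m k),
        (Equiv.Perm.sign π₀ : ℤ) •
          ∑ σ : Fin m → Equiv.Perm (Fin k),
            ∑ w ∈ Γf,
              (((∏ i, Equiv.Perm.sign (σ i) : ℤˣ) : ℤ)) •
                (MvPolynomial.C (∏ i : Fin m, coeffOf f fun j => (w i j : ℕ)) *
                  ∏ i : Fin m, ∏ j : Fin k,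
                    (MvPolynomial.X (π₀ (bpos m k i (σ i j))) : MvPolynomial (Fin (m * k)) R)
                      ^ ((w i j : ℕ)))
      = ∑ p ∈ (Finset.univ.filter (IsPartRep m k)) ×ˢ
            (Finset.univ : Finset (Fin m → Equiv.Perm (Fin k))),
          (Equiv.Perm.sign p.1 : ℤ) •
            ∑ w ∈ Γf,
              (((∏ i, Equiv.Perm.sign (p.2 i) : ℤˣ) : ℤ)) •
                (MvPolynomial.C (∏ i : Fin m, coeffOf f fun j => (w i j : ℕ)) *
                  ∏ i : Fin m, ∏ j : Fin k,
                    (MvPolynomial.X (p.1 (bpos m k i (p.2 i j))) : MvPolynomial (Fin (m * k)) R)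
                      ^ ((w i j : ℕ))) := by
        rw [Finset.sum_product]
        exact Finset.sum_congr rfl fun π₀ _ => Finset.smul_sum
    _ = ∑ π ∈ Finset.univ.filter (IsLeadMono m k),
          ∑ w ∈ Γf,
            (Equiv.Perm.sign π : ℤ) •
              (MvPolynomial.C (∏ i : Fin m, coeffOf f fun j => (w i j : ℕ)) *
                ∏ i : Fin m, ∏ j : Fin k,
                  (MvPolynomial.X (π (bpos m k i j)) : MvPolynomial (Fin (m * k)) R)
                    ^ ((w i j : ℕ))) := by
        apply Finset.sum_nbij' (i := fun p => Phi m k p.1 p.2)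
          (j := fun π => (normP m k π, fun i => (sortP m k π (cperm m k π i))⁻¹))
        · intro p _
          simp only [Finset.mem_filter, Finset.mem_univ, true_and]
          exact isLeadMono_Phi p.1 p.2
        · intro π _
          simp only [Finset.mem_product, Finset.mem_filter, Finset.mem_univ, true_and]
          exact ⟨isPartRep_normP π, trivial⟩
        · intro p hp
          simp only [Finset.mem_product, Finset.mem_filter, Finset.mem_univ, true_and] at hp
          exact Prod.ext (normP_Phi p.1 hp.1 p.2) (sigma_Phi p.1 hp.1 p.2)
        · intro π hπ
          simp only [Finset.mem_filter, Finset.mem_univ, true_and] at hπ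
          exact Phi_normP π hπ
        · intro p _
          exact key p.1 p.2

end Stmt7Aux

theorem stmt7 (m k : ℕ) (hk : Even k) (R : Type*) [Field R] [CharZero R]
    (f : MvPolynomial (Fin k) R)
    (hhom : f.IsHomogeneous (k / 2 * (m * k - 1)))
    (hskew : IsSkewPoly f) :
    hyperPfPoly m k f =
      ∑ π ∈ Finset.univ.filter (IsLeadMono m k),
        ∑ w ∈ Finset.univ.filter
            (fun w : Fin m → Fin k → Fin (k / 2 * (m * k - 1) + 1) =>
              ∀ i : Fin m, InGamma (m * k) k fun j => (w i j : ℕ)),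
          (Equiv.Perm.sign π : ℤ) •
            (MvPolynomial.C (∏ i : Fin m, coeffOf f fun j => (w i j : ℕ)) *
              ∏ i : Fin m, ∏ j : Fin k,
                (MvPolynomial.X (π (bpos m k i j)) : MvPolynomial (Fin (m * k)) R)
                  ^ ((w i j : ℕ))) := by
  unfold hyperPfPoly
  rw [Stmt7Aux.L2core hk f]
  apply Finset.sum_congr rfl
  intro π₀ _
  rw [Stmt7Aux.L1core f hhom hskew π₀]
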